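/- Consider a discrete-time conewise linear system (CLS) satisfying the continuity assumption, and suppose that every solution exhibits a finite number of switches, i.e., ς(x) < ∞ for every x ∈ ℝ^n. Then the origin is globally exponentially stable for the CLS if and only if the origin is globally exponentially stable for the restriction of the CLS to the set F (i.e., for solutions initialized in F, which is forward invariant). -/

import Mathlib

open Matrix

set_option maxHeartbeats 1000000

/-- For a discrete-time conewise linear system satisfying the continuity
assumption, if every solution exhibits a finite number of switches (i.e. for every
initial condition there is an admissible mode sequence with finitely many jumps), then
the origin is globally exponentially stable if and only if the origin is globally
exponentially stable for the restriction of the system to the forward invariant set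
`F = {x : ∃ i, ∀ t, Aᵢᵗ x ∈ Cᵢ}`. -/
theorem cls_ges_iff_ges_on_F
    (n m : ℕ) (hm : 1 ≤ m)
    (C : Fin m → Set (EuclideanSpace ℝ (Fin n)))
    (hCne : ∀ i, (C i).Nonempty)
    (hCclosed : ∀ i, IsClosed (C i))
    (hCcone : ∀ i, ∀ x ∈ C i, ∀ y ∈ C i, ∀ a b : ℝ, 0 ≤ a → 0 ≤ b → a • x + b • y ∈ C i)
    (hCcover : (⋃ i, C i) = Set.univ)
    (hCdisj : ∀ i j, i ≠ j → interior (C i) ∩ interior (C j) = ∅)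
    (A : Fin m → Matrix (Fin n) (Fin n) ℝ)
    (hcont : ∀ i j, ∀ ξ ∈ C i ∩ C j, (A i).mulVec ξ = (A j).mulVec ξ)
    -- φ is the (unique) solution map of the CLS
    (φ : ℕ → EuclideanSpace ℝ (Fin n) → EuclideanSpace ℝ (Fin n))
    (hφ0 : ∀ x, φ 0 x = x)
    (hφstep : ∀ t x i, φ t x ∈ C i → φ (t + 1) x = (A i).mulVec (φ t x))
    -- every solution exhibits a finite number of switches: ς(x) < ∞
    (hfin : ∀ x, ∃ σ : ℕ → Fin m, (∀ t, φ t x ∈ C (σ t)) ∧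
      {t : ℕ | 1 ≤ t ∧ σ t ≠ σ (t - 1)}.Finite) :
    (∃ c1 c2 : ℝ, 1 ≤ c1 ∧ 0 < c2 ∧
        ∀ x, ∀ t : ℕ, ‖φ t x‖ ≤ c1 * Real.exp (-c2 * t) * ‖x‖) ↔
      (∃ c1 c2 : ℝ, 1 ≤ c1 ∧ 0 < c2 ∧
        ∀ x ∈ {x | ∃ i, ∀ t : ℕ, WithLp.toLp 2 ((A i ^ t).mulVec x) ∈ C i},
          ∀ t : ℕ, ‖φ t (WithLp.toLp 2 x)‖ ≤ c1 * Real.exp (-c2 * t) * ‖x‖) := by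
  classical
  -- bridging between the ℓ² norm on `EuclideanSpace` and the sup norm on `Fin n → ℝ`
  have hpile : ∀ v : EuclideanSpace ℝ (Fin n), ‖(id v : Fin n → ℝ)‖ ≤ ‖v‖ := by
    intro v
    simp only [id_eq]
    have hc : ∀ i, ‖v i‖ ≤ ‖v‖ := by
      intro i
      rw [EuclideanSpace.norm_eq]
      have h1 : ‖v i‖ = Real.sqrt (‖v i‖ ^ 2) := (Real.sqrt_sq (norm_nonneg _)).symm
      rw [h1]
      exact Real.sqrt_le_sqrt (Finset.single_le_sum (f := fun j => ‖v j‖ ^ 2)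
        (fun j _ => by positivity) (Finset.mem_univ i))
    exact (pi_norm_le_iff_of_nonneg (norm_nonneg v)).mpr hc
  have hEle : ∀ v : Fin n → ℝ, ‖(id (WithLp.toLp 2 v) : EuclideanSpace ℝ (Fin n))‖ ≤ ((n:ℝ)+1) * ‖v‖ := by
    intro v
    simp only [id_eq]
    have hb : ∀ i, ‖v i‖ ≤ ‖v‖ := fun i => norm_le_pi_norm v i
    have h0 : (0:ℝ) ≤ ‖v‖ := norm_nonneg v
    rw [EuclideanSpace.norm_eq]
    simp only [PiLp.toLp_apply]
    have hsum : (∑ i, ‖v i‖ ^ 2) ≤ (((n:ℝ)+1) * ‖v‖) ^ 2 := by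
      calc (∑ i, ‖v i‖ ^ 2) ≤ ∑ _i : Fin n, ‖v‖ ^ 2 :=
            Finset.sum_le_sum (fun i _ => by
              have h1 := hb i
              have h2 := norm_nonneg (v i)
              nlinarith)
        _ = (n:ℝ) * ‖v‖ ^ 2 := by simp
        _ ≤ (((n:ℝ)+1) * ‖v‖) ^ 2 := by nlinarith [Nat.cast_nonneg (α := ℝ) n]
    calc Real.sqrt (∑ i, ‖v i‖ ^ 2)
          ≤ Real.sqrt ((((n:ℝ)+1) * ‖v‖) ^ 2) := Real.sqrt_le_sqrt hsum
      _ = ((n:ℝ)+1) * ‖v‖ := Real.sqrt_sq (by positivity)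
  constructor
  · -- GES implies GES on F (up to adjusting constants for the norms)
    rintro ⟨c1, c2, h1c, h2c, h⟩
    refine ⟨c1 * ((n:ℝ)+1), c2, ?_, h2c, ?_⟩
    · nlinarith [Nat.cast_nonneg (α := ℝ) n]
    · intro x _ t
      have h1 := h (WithLp.toLp 2 x) t
      have h2 : @norm (EuclideanSpace ℝ (Fin n)) _ (WithLp.toLp 2 x) ≤ ((n:ℝ)+1) * ‖x‖ := hEle x
      have h3 : (0:ℝ) ≤ c1 * Real.exp (-c2 * t) := by
        have := Real.exp_pos (-c2 * (t:ℝ))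
        nlinarith
      calc ‖φ t (WithLp.toLp 2 x)‖ ≤ c1 * Real.exp (-c2 * t) * @norm (EuclideanSpace ℝ (Fin n)) _ (WithLp.toLp 2 x) := h1
        _ ≤ c1 * Real.exp (-c2 * t) * (((n:ℝ)+1) * ‖x‖) := mul_le_mul_of_nonneg_left h2 h3
        _ = c1 * ((n:ℝ)+1) * Real.exp (-c2 * t) * ‖x‖ := by ring
  -- The hard direction: GES on F implies GES
  rintro ⟨c1, c2, hc1, hc2, hFdec⟩
  -- every point is in some cone
  have hcov : ∀ y : EuclideanSpace ℝ (Fin n), ∃ i, y ∈ C i := by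
    intro y
    have : y ∈ ⋃ i, C i := by rw [hCcover]; trivial
    simpa using this
  have hφstep' : ∀ t x i, φ t x ∈ C i → φ (t + 1) x = WithLp.toLp 2 ((A i).mulVec (φ t x)) :=
    fun t x i h => by rw [← hφstep t x i h]
  -- the continuous linear maps given by the matrices
  set T : Fin m → (EuclideanSpace ℝ (Fin n)) →L[ℝ] (EuclideanSpace ℝ (Fin n)) :=
    fun i => LinearMap.toContinuousLinearMap
      (Matrix.toEuclideanLin (A i) : EuclideanSpace ℝ (Fin n) →ₗ[ℝ] EuclideanSpace ℝ (Fin n))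
    with hTdef
  have hT : ∀ i (v : EuclideanSpace ℝ (Fin n)), T i v = WithLp.toLp 2 ((A i).mulVec v) := fun i v => rfl
  -- one step growth bound
  obtain ⟨L, hL1, hLb⟩ :
      ∃ L : ℝ, 1 ≤ L ∧ ∀ i (v : EuclideanSpace ℝ (Fin n)),
        ‖(WithLp.toLp 2 ((A i).mulVec v) : EuclideanSpace ℝ (Fin n))‖ ≤ L * ‖v‖ := by
    refine ⟨1 + ∑ i, ‖T i‖, le_add_of_nonneg_right
      (Finset.sum_nonneg fun i _ => norm_nonneg _), fun i v => ?_⟩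
    have h2 : ‖T i v‖ ≤ ‖T i‖ * ‖v‖ := (T i).le_opNorm v
    have h3 : ‖T i‖ ≤ 1 + ∑ j, ‖T j‖ := by
      have h4 : ‖T i‖ ≤ ∑ j, ‖T j‖ :=
        Finset.single_le_sum (fun j _ => norm_nonneg (T j)) (Finset.mem_univ i)
      linarith
    show ‖T i v‖ ≤ (1 + ∑ j, ‖T j‖) * ‖v‖
    exact h2.trans (mul_le_mul_of_nonneg_right h3 (norm_nonneg v))
  have hLpos : (0:ℝ) < L := by linarith
  -- semigroup property
  have hsg : ∀ (x : EuclideanSpace ℝ (Fin n)) (s t : ℕ), φ (t + s) x = φ t (φ s x) := by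
    intro x s t
    induction t with
    | zero => simp [hφ0]
    | succ t ih =>
      obtain ⟨i, hi⟩ := hcov (φ t (φ s x))
      have h1 : φ (t + s) x ∈ C i := by rw [ih]; exact hi
      calc φ (t + 1 + s) x = φ ((t + s) + 1) x := by rw [Nat.succ_add]
        _ = WithLp.toLp 2 ((A i).mulVec (φ (t + s) x)) := hφstep' (t + s) x i h1
        _ = WithLp.toLp 2 ((A i).mulVec (φ t (φ s x))) := by rw [ih]
        _ = φ (t + 1) (φ s x) := (hφstep' t (φ s x) i hi).symm
  -- the origin is a fixed point
  have hzero : ∀ t, φ t (0 : EuclideanSpace ℝ (Fin n)) = 0 := by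
    intro t
    induction t with
    | zero => exact hφ0 0
    | succ t ih =>
      obtain ⟨i, hi⟩ := hcov (φ t (0 : EuclideanSpace ℝ (Fin n)))
      rw [hφstep' t 0 i hi, ih]
      simp
  -- positive homogeneity
  have hhom : ∀ (t : ℕ) (x : EuclideanSpace ℝ (Fin n)) (l : ℝ), 0 < l →
      φ t (l • x) = l • φ t x := by
    intro t x l hl
    induction t with
    | zero => rw [hφ0, hφ0]
    | succ t ih =>
      obtain ⟨i, hi⟩ := hcov (φ t x)
      have hmem : φ t (l • x) ∈ C i := by
        rw [ih]
        have h5 := hCcone i _ hi _ hi l 0 hl.le le_rfl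
        simpa using h5
      rw [hφstep' t (l • x) i hmem, hφstep' t x i hi, ih, WithLp.ofLp_smul, Matrix.mulVec_smul,
        WithLp.toLp_smul]
  -- one-step norm bound along trajectories
  have hLstep : ∀ (y : EuclideanSpace ℝ (Fin n)) (t : ℕ), ‖φ (t + 1) y‖ ≤ L * ‖φ t y‖ := by
    intro y t
    obtain ⟨i, hi⟩ := hcov (φ t y)
    rw [hφstep' t y i hi]
    exact hLb i (φ t y)
  -- growth bound along trajectories
  have hgrow : ∀ (x : EuclideanSpace ℝ (Fin n)) (t k : ℕ),
      ‖φ (t + k) x‖ ≤ L ^ k * ‖φ t x‖ := by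
    intro x t k
    induction k with
    | zero => simp
    | succ k ih =>
      have h1 : ‖φ (t + (k + 1)) x‖ ≤ L * ‖φ (t + k) x‖ := hLstep x (t + k)
      refine h1.trans ?_
      calc L * ‖φ (t + k) x‖ ≤ L * (L ^ k * ‖φ t x‖) := mul_le_mul_of_nonneg_left ih hLpos.le
        _ = L ^ (k + 1) * ‖φ t x‖ := by ring
  have hgrow0 : ∀ (x : EuclideanSpace ℝ (Fin n)) (t : ℕ), ‖φ t x‖ ≤ L ^ t * ‖x‖ := by
    intro x t
    have h := hgrow x 0 t
    simpa [hφ0] using h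
  -- continuity of the flow maps
  have hφcont : ∀ t, Continuous (φ t) := by
    have h1 : Continuous (φ 1) := by
      apply (locallyFinite_of_finite C).continuous hCcover hCclosed
      intro i
      have he : Set.EqOn (φ 1) (fun v : EuclideanSpace ℝ (Fin n) => (T i) v) (C i) := by
        intro x hx
        have hx0 : φ 0 x ∈ C i := by rwa [hφ0]
        have h2 := hφstep' 0 x i hx0
        rw [hφ0] at h2
        show φ 1 x = T i x
        rw [hT]
        exact h2
      exact (T i).continuous.continuousOn.congr he
    intro t
    induction t with
    | zero =>
      have h : φ 0 = fun x => x := funext hφ0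
      rw [h]; exact continuous_id
    | succ t ih =>
      have h : φ (t + 1) = fun x => φ 1 (φ t x) := by
        funext x
        rw [Nat.add_comm t 1]
        exact hsg x t 1
      rw [h]
      exact h1.comp ih
  -- pointwise attractivity from GES on F and finitely many switches
  have hatr : ∀ (x : EuclideanSpace ℝ (Fin n)) (δ : ℝ), 0 < δ → ∃ s : ℕ, ‖φ s x‖ < δ := by
    intro x δ hδ
    obtain ⟨σ, hσ, hJ⟩ := hfin x
    obtain ⟨T0, hT0⟩ : ∃ T0, ∀ t ∈ {t : ℕ | 1 ≤ t ∧ σ t ≠ σ (t - 1)}, t ≤ T0 := by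
      rcases hJ.bddAbove with ⟨T0, hT0⟩
      exact ⟨T0, fun t ht => hT0 ht⟩
    have hconst : ∀ s : ℕ, σ (T0 + s) = σ T0 := by
      intro s
      induction s with
      | zero => rfl
      | succ s ih =>
        by_contra hne
        have h1 : σ (T0 + s + 1) ≠ σ (T0 + s) := fun h => hne (h.trans ih)
        have hmem : (T0 + s + 1) ∈ {t : ℕ | 1 ≤ t ∧ σ t ≠ σ (t - 1)} := by
          refine ⟨by omega, ?_⟩
          simpa using h1
        have := hT0 _ hmem
        omega
    -- the tail point is in F
    have hyF : ∀ t : ℕ, (A (σ T0) ^ t).mulVec (φ T0 x) = φ (T0 + t) x := by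
      intro t
      induction t with
      | zero => simp [Matrix.one_mulVec]
      | succ t ih =>
        have hmem : φ (T0 + t) x ∈ C (σ T0) := by
          have h := hσ (T0 + t)
          rwa [hconst t] at h
        rw [pow_succ', ← Matrix.mulVec_mulVec, ih]
        exact (hφstep (T0 + t) x (σ T0) hmem).symm
    have hyFmem : WithLp.ofLp (φ T0 x) ∈
        {x | ∃ i, ∀ t : ℕ, WithLp.toLp 2 ((A i ^ t).mulVec x) ∈ C i} := by
      refine ⟨σ T0, fun t => ?_⟩
      rw [hyF t, WithLp.toLp_ofLp]
      have h := hσ (T0 + t)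
      rwa [hconst t] at h
    have hdec := hFdec (WithLp.ofLp (φ T0 x)) hyFmem
    have hdec' : ∀ u : ℕ, ‖φ u (φ T0 x)‖ ≤ c1 * Real.exp (-c2 * u) * ‖φ T0 x‖ := by
      intro u
      refine (hdec u).trans ?_
      have h6 : @norm (Fin n → ℝ) _ (φ T0 x) ≤ ‖φ T0 x‖ := hpile (φ T0 x)
      have hpos : (0:ℝ) < c1 * Real.exp (-c2 * u) := by
        have := Real.exp_pos (-c2 * (u:ℝ))
        nlinarith
      nlinarith [h6, hpos]
    -- choose a late enough time
    set M : ℝ := c1 * (‖φ T0 x‖ + 1) with hM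
    have hy0 : (0:ℝ) ≤ ‖φ T0 x‖ := norm_nonneg _
    have hMpos : 0 < M := by rw [hM]; nlinarith
    have hr1 : Real.exp (-c2) < 1 := by
      have := Real.exp_lt_exp.mpr (show -c2 < 0 by linarith)
      rwa [Real.exp_zero] at this
    obtain ⟨s, hs⟩ := exists_pow_lt_of_lt_one (div_pos hδ hMpos) hr1
    refine ⟨s + T0, ?_⟩
    have h1 : φ (s + T0) x = φ s (φ T0 x) := hsg x T0 s
    have h2 := hdec' s
    have h3 : Real.exp (-c2 * s) = Real.exp (-c2) ^ s := by
      rw [show -c2 * (s:ℝ) = (s:ℝ) * (-c2) by ring, Real.exp_nat_mul]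
    have h4 : Real.exp (-c2) ^ s * M < δ := (lt_div_iff₀ hMpos).mp hs
    have h5 : c1 * Real.exp (-c2 * s) * ‖φ T0 x‖ ≤ Real.exp (-c2) ^ s * M := by
      rw [h3, hM]
      have he := (Real.exp_pos (-c2)).le
      have hp : (0:ℝ) ≤ Real.exp (-c2) ^ s := pow_nonneg he s
      nlinarith
    rw [h1]
    calc ‖φ s (φ T0 x)‖ ≤ c1 * Real.exp (-c2 * s) * ‖φ T0 x‖ := h2
      _ ≤ Real.exp (-c2) ^ s * M := h5
      _ < δ := h4
  -- THE KEY CLAIM: uniform contraction after some fixed time D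
  have hclaim : ∃ D : ℕ, ∀ x : EuclideanSpace ℝ (Fin n), ‖x‖ = 1 → ‖φ D x‖ ≤ 1/2 := by
    by_contra hno
    push_neg at hno
    choose x hx1 hxbig using hno
    -- minimizing times
    have hminex : ∀ d : ℕ, ∃ s, s ≤ d ∧ ∀ t ≤ d, ‖φ s (x d)‖ ≤ ‖φ t (x d)‖ := by
      intro d
      obtain ⟨s, hs, h⟩ := Finset.exists_min_image (Finset.range (d+1))
        (fun t => ‖φ t (x d)‖) ⟨0, by simp⟩
      exact ⟨s, by simpa [Nat.lt_succ_iff] using hs,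
        fun t ht => h t (by simpa [Nat.lt_succ_iff] using ht)⟩
    choose s hsle hsmin using hminex
    have hms : ∀ d, s d + (d - s d) = d := fun d => Nat.add_sub_cancel' (hsle d)
    set mv : ℕ → ℝ := fun d => ‖φ (s d) (x d)‖ with hmv
    have hkey2 : ∀ d, 1/2 < L ^ (d - s d) * mv d := by
      intro d
      have hb := hgrow (x d) (s d) (d - s d)
      rw [hms d] at hb
      exact lt_of_lt_of_le (hxbig d) hb
    have hmpos : ∀ d, 0 < mv d := by
      intro d
      rcases (norm_nonneg (φ (s d) (x d))).lt_or_eq with h | h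
      · exact h
      · exfalso
        have h2 := hkey2 d
        have h3 : mv d = 0 := h.symm
        rw [h3, mul_zero] at h2
        linarith
    by_cases hB : Filter.Tendsto (fun d => d - s d) Filter.atTop Filter.atTop
    · -- Case B : arbitrarily long non-decaying tails
      set w : ℕ → EuclideanSpace ℝ (Fin n) := fun d => (mv d)⁻¹ • φ (s d) (x d) with hw
      have hwS : ∀ d, w d ∈ Metric.sphere (0 : EuclideanSpace ℝ (Fin n)) 1 := by
        intro d
        rw [mem_sphere_zero_iff_norm]
        show ‖(mv d)⁻¹ • φ (s d) (x d)‖ = 1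
        rw [norm_smul, Real.norm_eq_abs, abs_of_pos (inv_pos.mpr (hmpos d))]
        exact inv_mul_cancel₀ (hmpos d).ne'
      have hwlb : ∀ d, ∀ u ≤ d - s d, 1 ≤ ‖φ u (w d)‖ := by
        intro d u hu
        have hsd := hsle d
        have h1 : φ u (w d) = (mv d)⁻¹ • φ (u + s d) (x d) := by
          show φ u ((mv d)⁻¹ • φ (s d) (x d)) = (mv d)⁻¹ • φ (u + s d) (x d)
          rw [hhom u _ _ (inv_pos.mpr (hmpos d)), ← hsg (x d) (s d) u]
        rw [h1, norm_smul, Real.norm_eq_abs, abs_of_pos (inv_pos.mpr (hmpos d)),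
          ← div_eq_inv_mul, le_div_iff₀ (hmpos d), one_mul]
        exact hsmin d (u + s d) (by omega)
      obtain ⟨wst, hwstS, g, hgmono, hgconv⟩ :=
        (isCompact_sphere (0 : EuclideanSpace ℝ (Fin n)) 1).tendsto_subseq hwS
      have hwst : ∀ u : ℕ, 1 ≤ ‖φ u wst‖ := by
        intro u
        have hcontu : Filter.Tendsto (fun k => ‖φ u (w (g k))‖) Filter.atTop (nhds ‖φ u wst‖) :=
          (((hφcont u).tendsto wst).comp hgconv).norm
        refine ge_of_tendsto hcontu ?_
        have hev : ∀ᶠ k in Filter.atTop, u ≤ g k - s (g k) :=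
          (hB.comp hgmono.tendsto_atTop).eventually_ge_atTop u
        exact hev.mono fun k hk => hwlb (g k) u hk
      obtain ⟨u, hu⟩ := hatr wst 1 one_pos
      exact absurd (hwst u) (by linarith)
    · -- Case A : bounded tails along a subsequence
      rw [Filter.tendsto_atTop_atTop] at hB
      push_neg at hB
      obtain ⟨B, hBfreq⟩ := hB
      have hfreq : ∃ᶠ d in Filter.atTop, d - s d < B :=
        Filter.frequently_atTop.mpr fun N => by
          obtain ⟨d, hd1, hd2⟩ := hBfreq N
          exact ⟨d, hd1, hd2⟩
      obtain ⟨g, hgmono, hgB⟩ := Filter.extraction_of_frequently_atTop hfreq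
      set δ : ℝ := (1/2) * (L ^ B)⁻¹ with hδ
      have hLBpos : (0:ℝ) < L ^ B := pow_pos hLpos B
      have hδpos : 0 < δ := by rw [hδ]; positivity
      have hlb : ∀ k, ∀ t ≤ g k, δ ≤ ‖φ t (x (g k))‖ := by
        intro k t ht
        have h1 : δ ≤ mv (g k) := by
          have h2 := hkey2 (g k)
          have h3 : L ^ (g k - s (g k)) ≤ L ^ B := pow_le_pow_right₀ hL1 (hgB k).le
          have h4 : 1/2 < L ^ B * mv (g k) :=
            lt_of_lt_of_le h2 (mul_le_mul_of_nonneg_right h3 (hmpos _).le)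
          have h5 : (L ^ B)⁻¹ * L ^ B = 1 := inv_mul_cancel₀ hLBpos.ne'
          have h6 : (0:ℝ) < (L ^ B)⁻¹ := inv_pos.mpr hLBpos
          rw [hδ]
          nlinarith [h4, h5, h6, hmpos (g k)]
        exact le_trans h1 (hsmin (g k) t ht)
      have hxS : ∀ k, x (g k) ∈ Metric.sphere (0 : EuclideanSpace ℝ (Fin n)) 1 :=
        fun k => mem_sphere_zero_iff_norm.mpr (hx1 (g k))
      obtain ⟨xst, hxstS, g2, hg2mono, hg2conv⟩ :=
        (isCompact_sphere (0 : EuclideanSpace ℝ (Fin n)) 1).tendsto_subseq hxS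
      have hxst : ∀ t : ℕ, δ ≤ ‖φ t xst‖ := by
        intro t
        have hcontt : Filter.Tendsto (fun j => ‖φ t (x (g (g2 j)))‖) Filter.atTop
            (nhds ‖φ t xst‖) := (((hφcont t).tendsto xst).comp hg2conv).norm
        refine ge_of_tendsto hcontt ?_
        refine Filter.eventually_atTop.mpr ⟨t, fun j hj => ?_⟩
        exact hlb (g2 j) t (le_trans (le_trans hj hg2mono.le_apply) hgmono.le_apply)
      obtain ⟨u, hu⟩ := hatr xst δ hδpos
      exact absurd (hxst u) (by linarith)
  -- From the claim, conclude GES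
  obtain ⟨D, hD⟩ := hclaim
  have hhalf : ∀ x : EuclideanSpace ℝ (Fin n), ‖φ D x‖ ≤ 1/2 * ‖x‖ := by
    intro x
    rcases eq_or_ne x 0 with rfl | hx
    · rw [hzero]; simp
    · have hxn : (0:ℝ) < ‖x‖ := norm_pos_iff.mpr hx
      have hu : ‖(‖x‖⁻¹ • x : EuclideanSpace ℝ (Fin n))‖ = 1 := by
        rw [norm_smul, norm_inv, norm_norm]
        exact inv_mul_cancel₀ hxn.ne'
      have h1 := hD _ hu
      have h2 : φ D (‖x‖⁻¹ • x) = ‖x‖⁻¹ • φ D x := hhom D x _ (inv_pos.mpr hxn)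
      rw [h2, norm_smul, norm_inv, norm_norm] at h1
      calc ‖φ D x‖ = ‖x‖ * (‖x‖⁻¹ * ‖φ D x‖) := by field_simp
        _ ≤ ‖x‖ * (1/2) := mul_le_mul_of_nonneg_left h1 hxn.le
        _ = 1/2 * ‖x‖ := by ring
  rcases Nat.eq_zero_or_pos D with hD0 | hDpos
  · -- degenerate case : the state space is trivial
    refine ⟨1, 1, le_refl 1, one_pos, fun x t => ?_⟩
    have h0 : ‖x‖ ≤ 0 := by
      have h := hhalf x
      rw [hD0, hφ0] at h
      linarith
    have hx0 : x = 0 := norm_le_zero_iff.mp h0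
    rw [hx0, hzero]
    simp
  · -- main case
    have hkey3 : ∀ t : ℕ, ∀ x : EuclideanSpace ℝ (Fin n),
        ‖φ t x‖ ≤ (1/2) ^ (t / D) * L ^ (t % D) * ‖x‖ := by
      intro t
      induction t using Nat.strong_induction_on with
      | _ t ih =>
        intro x
        rcases lt_or_ge t D with h | h
        · rw [Nat.div_eq_of_lt h, Nat.mod_eq_of_lt h]
          simpa using hgrow0 x t
        · obtain ⟨t', rfl⟩ : ∃ t', t = t' + D := ⟨t - D, by omega⟩
          rw [Nat.add_div_right t' hDpos, Nat.add_mod_right]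
          have h1 : φ (t' + D) x = φ t' (φ D x) := hsg x D t'
          have h2 := ih t' (by omega) (φ D x)
          have hpq : (0:ℝ) ≤ (1/2:ℝ) ^ (t' / D) * L ^ (t' % D) := by positivity
          calc ‖φ (t' + D) x‖ = ‖φ t' (φ D x)‖ := by rw [h1]
            _ ≤ (1/2) ^ (t' / D) * L ^ (t' % D) * ‖φ D x‖ := h2
            _ ≤ (1/2) ^ (t' / D) * L ^ (t' % D) * (1/2 * ‖x‖) :=
                mul_le_mul_of_nonneg_left (hhalf x) hpq
            _ = (1/2) ^ (t' / D + 1) * L ^ (t' % D) * ‖x‖ := by ring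
    have hlog2 : (0:ℝ) < Real.log 2 := Real.log_pos (by norm_num)
    have hDR : (0:ℝ) < (D:ℝ) := Nat.cast_pos.mpr hDpos
    refine ⟨2 * L ^ D, Real.log 2 / D, ?_, div_pos hlog2 hDR, ?_⟩
    · have h1 : (1:ℝ) ≤ L ^ D := by simpa using pow_le_pow_right₀ hL1 (Nat.zero_le D)
      linarith
    · intro x t
      have hexp : (1/2:ℝ) ^ (t / D) * L ^ (t % D) ≤
          2 * L ^ D * Real.exp (-(Real.log 2 / D) * t) := by
        have hr : t % D < D := Nat.mod_lt t hDpos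
        have h1 : L ^ (t % D) ≤ L ^ D := pow_le_pow_right₀ hL1 hr.le
        have hLD : (0:ℝ) < L ^ D := pow_pos hLpos D
        have hnat : t < D * (t / D + 1) := by
          have h3 := Nat.div_add_mod t D
          have h3b : t % D < D := Nat.mod_lt t hDpos
          have h3c : D * (t / D + 1) = D * (t / D) + D := by ring
          omega
        have hcast : (t:ℝ) ≤ (D:ℝ) * (((t / D : ℕ):ℝ) + 1) := by
          have h7 : (t:ℝ) < (D:ℝ) * (((t / D : ℕ):ℝ) + 1) := by exact_mod_cast hnat
          exact h7.le
        have h5 : (Real.log 2 / D) * t ≤ Real.log 2 * (((t / D : ℕ):ℝ) + 1) := by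
          have h5a : (Real.log 2 / D) * t ≤ (Real.log 2 / D) * ((D:ℝ) * (((t / D : ℕ):ℝ) + 1)) :=
            mul_le_mul_of_nonneg_left hcast (div_pos hlog2 hDR).le
          have h5b : (Real.log 2 / D) * ((D:ℝ) * (((t / D : ℕ):ℝ) + 1)) =
              Real.log 2 * (((t / D : ℕ):ℝ) + 1) := by field_simp
          linarith
        have h2 : ((1:ℝ)/2) ^ (t / D) ≤ 2 * Real.exp (-(Real.log 2 / D) * t) := by
          have he : ((1:ℝ)/2) = Real.exp (-Real.log 2) := by
            rw [Real.exp_neg, Real.exp_log (by norm_num : (0:ℝ) < 2)]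
            norm_num
          have hq : ((1:ℝ)/2) ^ (t / D) = Real.exp (((t / D : ℕ):ℝ) * (-Real.log 2)) := by
            rw [he, ← Real.exp_nat_mul]
          have h9 : (2:ℝ) * Real.exp (-(Real.log 2 / D) * t) =
              Real.exp (Real.log 2 + -(Real.log 2 / D) * t) := by
            rw [Real.exp_add, Real.exp_log (by norm_num : (0:ℝ) < 2)]
          rw [hq, h9]
          apply Real.exp_le_exp.mpr
          linarith [h5]
        calc (1/2:ℝ) ^ (t / D) * L ^ (t % D) ≤ (1/2) ^ (t / D) * L ^ D :=
              mul_le_mul_of_nonneg_left h1 (by positivity)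
          _ ≤ (2 * Real.exp (-(Real.log 2 / D) * t)) * L ^ D :=
              mul_le_mul_of_nonneg_right h2 hLD.le
          _ = 2 * L ^ D * Real.exp (-(Real.log 2 / D) * t) := by ring
      calc ‖φ t x‖ ≤ (1/2) ^ (t / D) * L ^ (t % D) * ‖x‖ := hkey3 t x
        _ ≤ 2 * L ^ D * Real.exp (-(Real.log 2 / D) * t) * ‖x‖ :=
            mul_le_mul_of_nonneg_right hexp (norm_nonneg x)
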